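/- For μ ∈ Γ_{k−1}, Σ_i σ_{k−1}(μ|i)/σ_{k−1}(μ) − σ_k(μ)·Σ_i σ_{k−2}(μ|i)/σ_{k−1}(μ)² = ((n−k+1)σ_{k−1}(μ)² − (n−k+2)σ_k(μ)σ_{k−2}(μ))/σ_{k−1}(μ)² ≥ (n−k+1)/k, i.e., the trace of the derivative matrix of σ_k/σ_{k−1} is bounded below by (n−k+1)/k. -/

import Mathlib

open Finset

/-- The k-th elementary symmetric polynomial of x : Fin n -> R. -/
noncomputable def esymm (n k : ℕ) (x : Fin n → ℝ) : ℝ :=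
  ∑ s ∈ Finset.univ.powersetCard k, ∏ i ∈ s, x i

/-- The Garding cone Gamma_k. -/
def Gamma (n k : ℕ) : Set (Fin n → ℝ) :=
  {x | ∀ j, 1 ≤ j → j ≤ k → 0 < esymm n j x}

/-- The k-th elementary symmetric polynomial of x with the i-th entry deleted. -/
noncomputable def esymmDel (n k : ℕ) (x : Fin n → ℝ) (i : Fin n) : ℝ :=
  ∑ s ∈ (Finset.univ.erase i).powersetCard k, ∏ j ∈ s, x j

section NewtonAux
open Polynomial

/-- A real polynomial is real-rooted if it has as many real roots (with multiplicity)
as its degree. -/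
def RealRooted (p : ℝ[X]) : Prop := Multiset.card p.roots = p.natDegree

lemma realRooted_zero : RealRooted (0 : ℝ[X]) := by simp [RealRooted]

lemma realRooted_C (c : ℝ) : RealRooted (C c) := by simp [RealRooted]

lemma RealRooted.mul {p q : ℝ[X]} (hp : RealRooted p) (hq : RealRooted q) :
    RealRooted (p * q) := by
  rcases eq_or_ne p 0 with rfl | hp0; · simpa using realRooted_zero
  rcases eq_or_ne q 0 with rfl | hq0; · simpa using realRooted_zero
  unfold RealRooted at *
  rw [roots_mul (mul_ne_zero hp0 hq0), natDegree_mul hp0 hq0, Multiset.card_add, hp, hq]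

lemma realRooted_X_sub_C (r : ℝ) : RealRooted (X - C r) := by
  simp [RealRooted, roots_X_sub_C]

lemma realRooted_multiset_prod (s : Multiset ℝ) :
    RealRooted (s.map (fun r => X - C r)).prod := by
  unfold RealRooted
  rw [roots_multiset_prod_X_sub_C, natDegree_multiset_prod_X_sub_C_eq_card]

lemma RealRooted.derivative {p : ℝ[X]} (hp : RealRooted p) :
    RealRooted (Polynomial.derivative p) := by
  rcases Nat.eq_zero_or_pos p.natDegree with h0 | h0
  · rw [eq_C_of_natDegree_eq_zero h0, derivative_C]; exact realRooted_zero
  have h1 := Polynomial.card_roots_le_derivative p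
  have h2 := Polynomial.card_roots' (Polynomial.derivative p)
  have h3 := Polynomial.natDegree_derivative_le p
  unfold RealRooted at *
  omega

lemma RealRooted.iterate {p : ℝ[X]} (hp : RealRooted p) (k : ℕ) :
    RealRooted (Polynomial.derivative^[k] p) := by
  induction k with
  | zero => simpa
  | succ k ih => rw [Function.iterate_succ_apply']; exact ih.derivative

lemma natDegree_reflect_le {p : ℝ[X]} {N : ℕ} (h : p.natDegree ≤ N) :
    (reflect N p).natDegree ≤ N := by
  apply Polynomial.natDegree_le_iff_coeff_eq_zero.2
  intro i hi
  rw [coeff_reflect, revAt_eq_self_of_lt hi]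
  exact Polynomial.coeff_eq_zero_of_natDegree_lt (lt_of_le_of_lt h hi)

lemma realRooted_one_sub_C_mul_X (r : ℝ) : RealRooted (1 - C r * X) := by
  rcases eq_or_ne r 0 with rfl | hr
  · simpa using realRooted_C 1
  · have : (1 : ℝ[X]) - C r * X = C (-r) * (X - C r⁻¹) := by
      rw [mul_sub, ← C_mul, neg_mul, mul_inv_cancel₀ hr]
      simp only [map_neg, map_one]
      ring
    rw [this]
    exact (realRooted_C _).mul (realRooted_X_sub_C _)

lemma realRooted_prod_one_sub (s : Multiset ℝ) :
    RealRooted (s.map (fun r => (1 : ℝ[X]) - C r * X)).prod := by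
  induction s using Multiset.induction with
  | empty => simpa using realRooted_C 1
  | cons r t ih =>
      simp only [Multiset.map_cons, Multiset.prod_cons]
      exact (realRooted_one_sub_C_mul_X r).mul ih

lemma realRooted_X_pow (m : ℕ) : RealRooted ((X : ℝ[X]) ^ m) := by
  induction m with
  | zero => simpa using realRooted_C 1
  | succ m ihm => rw [pow_succ]; exact ihm.mul (by simpa using realRooted_X_sub_C 0)

lemma reflect_multiset_prod (s : Multiset ℝ) :
    ∀ N, Multiset.card s ≤ N →
      reflect N (s.map (fun r => X - C r)).prod =
        (s.map (fun r => (1 : ℝ[X]) - C r * X)).prod * X ^ (N - Multiset.card s) := by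
  induction s using Multiset.induction with
  | empty =>
      intro N _
      simp only [Multiset.map_zero, Multiset.prod_zero, Multiset.card_zero, Nat.sub_zero,
        one_mul]
      rw [show (1 : ℝ[X]) = C 1 by simp, reflect_C, map_one, one_mul]
  | cons r t ih =>
      intro N hN
      rw [Multiset.card_cons] at hN
      simp only [Multiset.map_cons, Multiset.prod_cons, Multiset.card_cons]
      have hsplit : N = 1 + (N - 1) := by omega
      conv_lhs => rw [hsplit]
      rw [reflect_mul (X - C r) _ (by simp [natDegree_X_sub_C])
        (le_trans (natDegree_multiset_prod_X_sub_C_eq_card t).le (by omega))]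
      have h1 : reflect 1 (X - C r) = 1 - C r * X := by
        rw [show (X - C r : ℝ[X]) = C 1 * X ^ 1 + C (-r) * X ^ 0 by simp; ring,
          reflect_add, reflect_C_mul_X_pow, reflect_C_mul_X_pow,
          revAt_le (by norm_num : (1:ℕ) ≤ 1), revAt_le (Nat.zero_le 1)]
        norm_num
        ring
      rw [h1, ih (N - 1) (by omega),
        show N - 1 - Multiset.card t = N - (Multiset.card t + 1) by omega, mul_assoc]

lemma RealRooted.reflect {p : ℝ[X]} (hp : RealRooted p) {N : ℕ} (hN : p.natDegree ≤ N) :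
    RealRooted (reflect N p) := by
  rcases eq_or_ne p 0 with rfl | hp0
  · simpa using realRooted_zero
  have hrep := (Polynomial.C_leadingCoeff_mul_prod_multiset_X_sub_C (p := p) hp).symm
  have hcard : Multiset.card p.roots = p.natDegree := hp
  rw [hrep, reflect_C_mul, reflect_multiset_prod _ N (by rw [hcard]; exact hN)]
  exact (realRooted_C _).mul ((realRooted_prod_one_sub _).mul (realRooted_X_pow _))

lemma discrim_of_realRooted {p : ℝ[X]} (hp : RealRooted p) (hd : p.natDegree ≤ 2) :
    4 * p.coeff 0 * p.coeff 2 ≤ (p.coeff 1) ^ 2 := by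
  rcases lt_or_eq_of_le hd with hd2 | hd2
  · have : p.coeff 2 = 0 := Polynomial.coeff_eq_zero_of_natDegree_lt hd2
    rw [this, mul_zero]
    positivity
  · have hcard : Multiset.card p.roots = 2 := by rw [hp, hd2]
    obtain ⟨r, r', hrr⟩ := Multiset.card_eq_two.mp hcard
    have hrep := (Polynomial.C_leadingCoeff_mul_prod_multiset_X_sub_C (p := p) hp).symm
    rw [hrr] at hrep
    set a := p.leadingCoeff with ha
    have hexp : p = C a * (X ^ 2 + C (-(r + r')) * X + C (r * r')) := by
      rw [hrep]
      simp only [Multiset.insert_eq_cons, Multiset.map_cons, Multiset.prod_cons,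
        Multiset.map_singleton, Multiset.prod_singleton, map_neg, map_add, map_mul]
      ring
    have h0 : p.coeff 0 = a * (r * r') := by rw [hexp]; simp
    have h1 : p.coeff 1 = a * (-(r + r')) := by
      rw [hexp]
      simp [coeff_X_pow, coeff_C_mul, coeff_add, coeff_C, mul_comm]
    have h2 : p.coeff 2 = a := by
      rw [hexp]
      simp [coeff_X_pow, coeff_C_mul, coeff_add, coeff_C]
    rw [h0, h1, h2]
    nlinarith [sq_nonneg (a * (r - r'))]

lemma df_succ (t : ℕ) : (t + 1).descFactorial t = (t + 1) * t.descFactorial t := by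
  have h1 := Nat.succ_descFactorial_succ t t
  have h2 := Nat.descFactorial_succ (t + 1) t
  rw [show t + 1 - t = 1 by omega, one_mul] at h2
  rw [← h2]
  exact h1

lemma df_succ2 (t : ℕ) :
    2 * ((t + 2).descFactorial t) = (t + 2) * (t + 1) * t.descFactorial t := by
  have h1 : (t + 2).descFactorial (t + 2) = (t + 2) * (t + 1).descFactorial (t + 1) :=
    Nat.succ_descFactorial_succ (t + 1) (t + 1)
  have h2 := Nat.succ_descFactorial_succ t t
  have h3 := Nat.descFactorial_succ (t + 2) (t + 1)
  have h4 := Nat.descFactorial_succ (t + 2) t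
  rw [show t + 2 - (t + 1) = 1 by omega, one_mul] at h3
  rw [show t + 2 - t = 2 by omega] at h4
  calc 2 * ((t + 2).descFactorial t) = (t + 2).descFactorial (t + 1) := h4.symm
    _ = (t + 2).descFactorial (t + 2) := h3.symm
    _ = (t + 2) * (t + 1).descFactorial (t + 1) := h1
    _ = (t + 2) * ((t + 1) * t.descFactorial t) := by rw [h2]
    _ = (t + 2) * (t + 1) * t.descFactorial t := by ring

lemma df_pos (t : ℕ) : 0 < t.descFactorial t := by
  rcases Nat.eq_zero_or_pos (t.descFactorial t) with h | h
  · exact absurd (Nat.descFactorial_eq_zero_iff_lt.mp h) (lt_irrefl t)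
  · exact h

/-- Newton's inequality for the coefficients of a real-rooted polynomial, stated
subtraction-free: if `p` has degree at most `u + t + 2` then
`(u+2)(t+2) c_u c_{u+2} ≤ (u+1)(t+1) c_{u+1}^2`. -/
lemma newton_aux (p : ℝ[X]) (u t : ℕ) (hp : RealRooted p)
    (hd : p.natDegree ≤ u + t + 2) :
    ((u : ℝ) + 2) * ((t : ℝ) + 2) * (p.coeff u * p.coeff (u + 2)) ≤
      ((u : ℝ) + 1) * ((t : ℝ) + 1) * (p.coeff (u + 1)) ^ 2 := by
  set q := Polynomial.derivative^[u] p with hq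
  have hqrr : RealRooted q := hp.iterate u
  have hqdeg : q.natDegree ≤ t + 2 := by
    rw [hq]
    have := Polynomial.natDegree_iterate_derivative p u
    omega
  set r := reflect (t + 2) q with hr
  have hrrr : RealRooted r := hqrr.reflect hqdeg
  have hrdeg : r.natDegree ≤ t + 2 := natDegree_reflect_le hqdeg
  set s := Polynomial.derivative^[t] r with hs
  have hsrr : RealRooted s := hrrr.iterate t
  have hsdeg : s.natDegree ≤ 2 := by
    rw [hs]
    have := Polynomial.natDegree_iterate_derivative r t
    omega
  have hdisc := discrim_of_realRooted hsrr hsdeg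
  set D := ((t.descFactorial t : ℕ) : ℝ) with hD
  set E := ((u.descFactorial u : ℕ) : ℝ) with hE
  have hDpos : (0:ℝ) < D := by rw [hD]; exact_mod_cast df_pos t
  have hEpos : (0:ℝ) < E := by rw [hE]; exact_mod_cast df_pos u
  have e1t : (((t+1).descFactorial t : ℕ) : ℝ) = ((t:ℝ)+1) * D := by
    rw [hD, df_succ]; push_cast; ring
  have e1u : (((u+1).descFactorial u : ℕ) : ℝ) = ((u:ℝ)+1) * E := by
    rw [hE, df_succ]; push_cast; ring
  have e2t : 2 * (((t+2).descFactorial t : ℕ) : ℝ) = ((t:ℝ)+2) * ((t:ℝ)+1) * D := by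
    rw [hD]; exact_mod_cast df_succ2 t
  have e2u : 2 * (((u+2).descFactorial u : ℕ) : ℝ) = ((u:ℝ)+2) * ((u:ℝ)+1) * E := by
    rw [hE]; exact_mod_cast df_succ2 u
  -- compute the coefficients of s
  have hc0 : s.coeff 0 = D * (((u+2).descFactorial u : ℕ) : ℝ) * p.coeff (u+2) := by
    rw [hs, Polynomial.coeff_iterate_derivative, hr, coeff_reflect,
      revAt_le (by omega : 0 + t ≤ t + 2), show t + 2 - (0 + t) = 2 by omega,
      hq, Polynomial.coeff_iterate_derivative, nsmul_eq_mul, nsmul_eq_mul,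
      show 2 + u = u + 2 by omega, show 0 + t = t by omega, hD]
    ring
  have hc1 : s.coeff 1 = (((t:ℝ)+1) * D) * ((((u:ℝ)+1) * E) * p.coeff (u+1)) := by
    rw [hs, Polynomial.coeff_iterate_derivative, hr, coeff_reflect,
      revAt_le (by omega : 1 + t ≤ t + 2), show t + 2 - (1 + t) = 1 by omega,
      hq, Polynomial.coeff_iterate_derivative, nsmul_eq_mul, nsmul_eq_mul,
      show 1 + u = u + 1 by omega, show 1 + t = t + 1 by omega, e1t, e1u]
  have hc2 : s.coeff 2 = (((t+2).descFactorial t : ℕ) : ℝ) * (E * p.coeff u) := by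
    rw [hs, Polynomial.coeff_iterate_derivative, hr, coeff_reflect,
      revAt_le (by omega : 2 + t ≤ t + 2), show t + 2 - (2 + t) = 0 by omega,
      hq, Polynomial.coeff_iterate_derivative, nsmul_eq_mul, nsmul_eq_mul,
      show 0 + u = u by omega, show 2 + t = t + 2 by omega, hE]
  have h20 : 2 * s.coeff 0 = D * (((u:ℝ)+2) * ((u:ℝ)+1) * E) * p.coeff (u+2) := by
    rw [hc0]; linear_combination (D * p.coeff (u+2)) * e2u
  have h22 : 2 * s.coeff 2 = (((t:ℝ)+2) * ((t:ℝ)+1) * D) * (E * p.coeff u) := by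
    rw [hc2]; linear_combination (E * p.coeff u) * e2t
  have hkey : (2 * s.coeff 0) * (2 * s.coeff 2) ≤ (s.coeff 1)^2 := by nlinarith [hdisc]
  rw [h20, h22, hc1] at hkey
  refine le_of_mul_le_mul_right ?_
    (show (0:ℝ) < (((u:ℝ)+1) * ((t:ℝ)+1) * D^2 * E^2) by positivity)
  nlinarith [hkey]

lemma realRooted_prod_X_add_C (n : ℕ) (μ : Fin n → ℝ) :
    RealRooted (∏ i, (X + C (μ i))) := by
  have h := realRooted_multiset_prod (Finset.univ.val.map (fun i : Fin n => -(μ i)))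
  rw [Multiset.map_map] at h
  have : ∏ i, (X + C (μ i)) =
      (Multiset.map ((fun r => X - C r) ∘ fun i : Fin n => -(μ i)) Finset.univ.val).prod := by
    rw [Finset.prod_eq_multiset_prod]
    congr 1
    apply Multiset.map_congr rfl
    intro i _
    simp [sub_neg_eq_add]
  rw [this]
  exact h

lemma natDegree_prod_X_add_C (n : ℕ) (μ : Fin n → ℝ) :
    (∏ i, (X + C (μ i))).natDegree = n := by
  rw [Polynomial.natDegree_prod _ _ (fun i _ => Polynomial.X_add_C_ne_zero (μ i))]
  simp [natDegree_X_add_C]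

lemma coeff_prod_X_add_C (n : ℕ) (μ : Fin n → ℝ) (j : ℕ) (hj : j ≤ n) :
    (∏ i, (X + C (μ i))).coeff j = esymm n (n - j) μ := by
  rw [Finset.prod_X_add_C_coeff Finset.univ μ (by simpa using hj)]
  rw [esymm]
  congr 1
  simp

/-- Newton--Maclaurin inequality. -/
lemma newton_maclaurin (n k : ℕ) (hk : 2 ≤ k) (hkn : k ≤ n) (μ : Fin n → ℝ) :
    ((n : ℝ) - k + 2) * k * (esymm n k μ * esymm n (k - 2) μ) ≤
      ((n : ℝ) - k + 1) * ((k : ℝ) - 1) * (esymm n (k - 1) μ) ^ 2 := by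
  set P := ∏ i, (X + C (μ i)) with hP
  have hrr : RealRooted P := realRooted_prod_X_add_C n μ
  have hdeg : P.natDegree = n := natDegree_prod_X_add_C n μ
  have key := newton_aux P (n - k) (k - 2) hrr (by omega)
  rw [coeff_prod_X_add_C n μ (n - k) (by omega),
    coeff_prod_X_add_C n μ (n - k + 1) (by omega),
    coeff_prod_X_add_C n μ (n - k + 2) (by omega),
    show n - (n - k) = k by omega, show n - (n - k + 1) = k - 1 by omega,
    show n - (n - k + 2) = k - 2 by omega] at key
  have c1 : ((n - k : ℕ) : ℝ) = (n : ℝ) - k := by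
    rw [Nat.cast_sub hkn]
  have c2 : ((k - 2 : ℕ) : ℝ) = (k : ℝ) - 2 := by
    rw [Nat.cast_sub (by omega)]; norm_num
  rw [c1, c2] at key
  calc ((n : ℝ) - k + 2) * k * (esymm n k μ * esymm n (k - 2) μ)
      = ((n : ℝ) - k + 2) * ((k : ℝ) - 2 + 2) * (esymm n k μ * esymm n (k - 2) μ) := by
        ring
    _ ≤ ((n : ℝ) - k + 1) * ((k : ℝ) - 2 + 1) * (esymm n (k - 1) μ) ^ 2 := key
    _ = ((n : ℝ) - k + 1) * ((k : ℝ) - 1) * (esymm n (k - 1) μ) ^ 2 := by ring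

lemma sum_esymmDel (n j : ℕ) (hj : j ≤ n) (μ : Fin n → ℝ) :
    ∑ i, esymmDel n j μ i = ((n - j : ℕ) : ℝ) * esymm n j μ := by
  have hfilter : ∀ i : Fin n, (Finset.univ.erase i).powersetCard j =
      (Finset.univ.powersetCard j).filter (fun s => i ∉ s) := by
    intro i
    ext s
    simp only [Finset.mem_powersetCard, Finset.mem_filter, Finset.subset_erase,
      Finset.subset_univ, true_and]
    tauto
  simp only [esymmDel, hfilter, Finset.sum_filter]
  rw [Finset.sum_comm, esymm, Finset.mul_sum]
  refine Finset.sum_congr rfl ?_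
  intro s hs
  rw [← Finset.sum_filter, Finset.sum_const, nsmul_eq_mul]
  congr 1
  have hcompl : Finset.univ.filter (fun i => i ∉ s) = sᶜ := by
    ext; simp [Finset.mem_compl]
  rw [hcompl, Finset.card_compl, (Finset.mem_powersetCard.mp hs).2]
  simp

end NewtonAux

/-- Trace lower bound for the derivative matrix of sigma_k/sigma_{k-1} on Gamma_{k-1}. -/
theorem trace_lower_bound (n k : ℕ) (hk : 2 ≤ k) (hkn : k ≤ n)
    (μ : Fin n → ℝ) (hμ : μ ∈ Gamma n (k - 1)) :
    (∑ i, esymmDel n (k - 1) μ i) / esymm n (k - 1) μ -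
        esymm n k μ * (∑ i, esymmDel n (k - 2) μ i) / (esymm n (k - 1) μ) ^ 2 =
      (((n : ℝ) - (k : ℝ) + 1) * (esymm n (k - 1) μ) ^ 2 -
          ((n : ℝ) - (k : ℝ) + 2) * esymm n k μ * esymm n (k - 2) μ) /
        (esymm n (k - 1) μ) ^ 2 ∧
    ((n : ℝ) - (k : ℝ) + 1) / (k : ℝ) ≤
      (∑ i, esymmDel n (k - 1) μ i) / esymm n (k - 1) μ -
        esymm n k μ * (∑ i, esymmDel n (k - 2) μ i) / (esymm n (k - 1) μ) ^ 2 := by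
  have hpos : 0 < esymm n (k - 1) μ := hμ (k - 1) (by omega) le_rfl
  have hne : esymm n (k - 1) μ ≠ 0 := ne_of_gt hpos
  have hS1 := sum_esymmDel n (k - 1) (by omega) μ
  have hS2 := sum_esymmDel n (k - 2) (by omega) μ
  have c1 : ((n - (k - 1) : ℕ) : ℝ) = (n : ℝ) - k + 1 := by
    rw [show n - (k - 1) = n + 1 - k by omega, Nat.cast_sub (by omega)]
    push_cast; ring
  have c2 : ((n - (k - 2) : ℕ) : ℝ) = (n : ℝ) - k + 2 := by
    rw [show n - (k - 2) = n + 2 - k by omega, Nat.cast_sub (by omega)]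
    push_cast; ring
  rw [c1] at hS1
  rw [c2] at hS2
  have heq : (∑ i, esymmDel n (k - 1) μ i) / esymm n (k - 1) μ -
        esymm n k μ * (∑ i, esymmDel n (k - 2) μ i) / (esymm n (k - 1) μ) ^ 2 =
      (((n : ℝ) - (k : ℝ) + 1) * (esymm n (k - 1) μ) ^ 2 -
          ((n : ℝ) - (k : ℝ) + 2) * esymm n k μ * esymm n (k - 2) μ) /
        (esymm n (k - 1) μ) ^ 2 := by
    rw [hS1, hS2]
    field_simp
  refine ⟨heq, ?_⟩
  rw [heq]
  have hnm := newton_maclaurin n k hk hkn μ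
  have hkpos : (0 : ℝ) < (k : ℝ) := by exact_mod_cast (by omega : 0 < k)
  rw [div_le_div_iff₀ hkpos (by positivity)]
  nlinarith [hnm]
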